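/- Let F = ε·Ψ(ℓ_1,…,ℓ_r) ∈ X with ε ∈ {−1,1} and ‖ℓ_i‖ = 1 for all i. If ⟨F − E, b_{i,k}⟩ = 0 for all 1 ≤ i ≤ r and 1 ≤ k ≤ n_i (i.e. F − E is orthogonal to the tangent space T of X at E), then F = E, or F = −E, or ⟨F, E⟩ = 0. -/

import Mathlib

open scoped RealInnerProductSpace BigOperators

noncomputable section

/-- The set of exponent vectors `α : Fin (n+1) → ℕ` with `|α| = d`. -/
abbrev Exps (n d : ℕ) : Type := {α : Fin (n + 1) → ℕ // ∑ i, α i = d}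

instance (n d : ℕ) : Fintype (Exps n d) :=
  Fintype.subtype (Finset.Nat.antidiagonalTuple (n + 1) d) fun _ =>
    Finset.Nat.mem_antidiagonalTuple

/-- The Veronese map in Bombieri–Weyl coordinates. -/
def veronese (n d : ℕ) (ℓ : EuclideanSpace ℝ (Fin (n + 1))) :
    EuclideanSpace ℝ (Exps n d) := WithLp.toLp 2 fun (α : Exps n d) =>
  Real.sqrt ((d.factorial : ℝ) / ∏ i, ((α.1 i).factorial : ℝ)) * ∏ i, ℓ i ^ α.1 i

/-- The Segre–Veronese parametrization. -/
def Psi (r : ℕ) (n d : Fin r → ℕ)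
    (ℓ : (i : Fin r) → EuclideanSpace ℝ (Fin (n i + 1))) :
    EuclideanSpace ℝ ((i : Fin r) → Exps (n i) (d i)) :=
    WithLp.toLp 2 fun (α : (i : Fin r) → Exps (n i) (d i)) =>
  ∏ i, veronese (n i) (d i) (ℓ i) (α i)

/-- The exponent `(d, 0, …, 0)`. -/
def expPow (n d : ℕ) : Exps n d :=
  ⟨Pi.single 0 d, by simp⟩

/-- The exponent with `d - 1` in position `0`, `1` in position `k` (`1 ≤ k ≤ n`),
and `0` elsewhere. -/
def expTang (n d : ℕ) (hd : 0 < d) (k : Fin n) : Exps n d :=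
  ⟨Pi.single (0 : Fin (n + 1)) (d - 1) + Pi.single k.succ 1, by
    simp [Finset.sum_add_distrib, Nat.sub_add_cancel hd]⟩

/-- The distinguished point `E = x_0^{d_1} ⊗ ⋯ ⊗ x_0^{d_r}`. -/
def Epoint (r : ℕ) (n d : Fin r → ℕ) :
    EuclideanSpace ℝ ((i : Fin r) → Exps (n i) (d i)) :=
  Psi r n d fun _ => EuclideanSpace.single 0 1

/-- The tangent basis vector `b_{i,k}`: the standard basis vector of
`EuclideanSpace ℝ A` indexed by the tuple `(α_1, …, α_r)` with `α_j = (d_j,0,…,0)` for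
`j ≠ i` and `α_i` having entry `d_i - 1` in position `0` and entry `1` in position `k`. -/
def bvec (r : ℕ) (n d : Fin r → ℕ) (hd : ∀ i, 0 < d i) (i : Fin r) (k : Fin (n i)) :
    EuclideanSpace ℝ ((i : Fin r) → Exps (n i) (d i)) :=
  EuclideanSpace.single
    (Function.update (fun j => expPow (n j) (d j)) i (expTang (n i) (d i) (hd i) k)) 1



lemma prod_pow_single {n : ℕ} (ℓ : Fin (n+1) → ℝ) (j : Fin (n+1)) (e : ℕ) :
    ∏ i, ℓ i ^ (Pi.single j e : Fin (n+1) → ℕ) i = ℓ j ^ e := by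
  rw [Finset.prod_eq_single j (fun i _ hi => by simp [Pi.single_eq_of_ne hi]) (by simp)]
  simp

lemma prod_fact_single {n : ℕ} (j : Fin (n+1)) (e : ℕ) :
    ∏ i, (((Pi.single j e : Fin (n+1) → ℕ) i).factorial : ℝ) = e.factorial := by
  rw [Finset.prod_eq_single j (fun i _ hi => by simp [Pi.single_eq_of_ne hi]) (by simp)]
  simp

lemma veronese_expPow {n d : ℕ} (ℓ : EuclideanSpace ℝ (Fin (n+1))) :
    veronese n d ℓ (expPow n d) = ℓ 0 ^ d := by
  unfold veronese expPow
  simp only [WithLp.ofLp_toLp]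
  rw [prod_pow_single, prod_fact_single, div_self (by positivity), Real.sqrt_one, one_mul]

lemma veronese_expTang {n d : ℕ} (hd : 0 < d) (k : Fin n) (ℓ : EuclideanSpace ℝ (Fin (n+1))) :
    veronese n d ℓ (expTang n d hd k) = Real.sqrt d * (ℓ 0 ^ (d-1) * ℓ k.succ) := by
  unfold veronese expTang
  simp only [WithLp.ofLp_toLp]
  have h1 : ∏ i, ℓ i ^ ((Pi.single (0 : Fin (n+1)) (d-1) + Pi.single k.succ 1 : Fin (n+1) → ℕ) i)
      = ℓ 0 ^ (d-1) * ℓ k.succ := by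
    simp only [Pi.add_apply, pow_add, Finset.prod_mul_distrib, prod_pow_single, pow_one]
  have h2 : ∏ i, (((Pi.single (0 : Fin (n+1)) (d-1) + Pi.single k.succ 1 : Fin (n+1) → ℕ) i).factorial : ℝ)
      = (d-1).factorial := by
    rw [Finset.prod_eq_single 0 (fun i _ hi => ?_) (by simp)]
    · simp [Pi.single_eq_of_ne (Fin.succ_ne_zero k).symm]
    · rcases eq_or_ne i k.succ with rfl | h
      · simp [Pi.single_eq_of_ne hi]
      · simp [Pi.single_eq_of_ne hi, Pi.single_eq_of_ne h]
  rw [h1, h2]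
  congr 1
  have hfac : d.factorial = d * (d-1).factorial := by
    cases d with
    | zero => omega
    | succ m => simp [Nat.factorial_succ]
  rw [hfac]
  push_cast
  rw [mul_div_assoc, div_self (by positivity), mul_one]

lemma expTang_ne_expPow {n d : ℕ} (hd : 0 < d) (k : Fin n) :
    expTang n d hd k ≠ expPow n d := by
  intro h
  have := congrArg (fun α : Exps n d => α.1 k.succ) h
  simp [expTang, expPow, Pi.single_eq_of_ne (Fin.succ_ne_zero k)] at this

lemma veronese_supported {n d : ℕ} (ℓ : EuclideanSpace ℝ (Fin (n+1)))
    (h : ∀ m : Fin (n+1), m ≠ 0 → ℓ m = 0) (α : Exps n d) :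
    veronese n d ℓ α = if α = expPow n d then ℓ 0 ^ d else 0 := by
  by_cases hα : α = expPow n d
  · rw [hα, if_pos rfl, veronese_expPow]
  · rw [if_neg hα]
    have : ∃ j, j ≠ 0 ∧ α.1 j ≠ 0 := by
      by_contra hc
      push_neg at hc
      apply hα
      have h0 : α.1 0 = d := by
        have hsum := α.2
        rw [Fin.sum_univ_succ] at hsum
        have hz : ∀ j : Fin n, α.1 j.succ = 0 := fun j => hc j.succ (Fin.succ_ne_zero j)
        simpa [hz] using hsum
      apply Subtype.ext
      funext i
      rcases eq_or_ne i 0 with rfl | hi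
      · simp [expPow, h0]
      · simp [expPow, Pi.single_eq_of_ne hi, hc i hi]
    obtain ⟨j, hj0, hjpos⟩ := this
    unfold veronese
    simp only [WithLp.ofLp_toLp]
    have : ∏ i, ℓ i ^ α.1 i = 0 :=
      Finset.prod_eq_zero (Finset.mem_univ j) (by rw [h j hj0]; exact zero_pow hjpos)
    rw [this, mul_zero]

lemma Psi_supported (r : ℕ) (n d : Fin r → ℕ)
    (ℓ : (i : Fin r) → EuclideanSpace ℝ (Fin (n i + 1)))
    (h : ∀ i, ∀ m : Fin (n i + 1), m ≠ 0 → ℓ i m = 0) :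
    Psi r n d ℓ = (∏ i, (ℓ i 0) ^ (d i)) •
      EuclideanSpace.single (fun j => expPow (n j) (d j)) 1 := by
  ext α
  show Psi r n d ℓ α = (∏ i, (ℓ i 0) ^ (d i)) * EuclideanSpace.single (fun j => expPow (n j) (d j)) (1:ℝ) α
  rw [EuclideanSpace.single_apply]
  unfold Psi
  simp only [WithLp.ofLp_toLp]
  by_cases hα : α = fun j => expPow (n j) (d j)
  · rw [if_pos hα, mul_one]
    exact Finset.prod_congr rfl fun i _ => by rw [veronese_supported (ℓ i) (h i), hα, if_pos rfl]
  · rw [if_neg hα, mul_zero]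
    have : ∃ i, α i ≠ expPow (n i) (d i) := by
      by_contra hc; push_neg at hc; exact hα (funext hc)
    obtain ⟨i, hi⟩ := this
    exact Finset.prod_eq_zero (Finset.mem_univ i)
      (by rw [veronese_supported (ℓ i) (h i), if_neg hi])

lemma Epoint_eq (r : ℕ) (n d : Fin r → ℕ) :
    Epoint r n d = EuclideanSpace.single (fun j => expPow (n j) (d j)) 1 := by
  rw [Epoint, Psi_supported r n d _ (fun i m hm => by simp [hm])]
  simp

/-- if `F = ε·Ψ(ℓ₁, …, ℓ_r)` is a point of the Segre–Veronese
manifold such that `F − E` is orthogonal to the tangent space of `X` at `E`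
(i.e. to all `b_{i,k}`), then `F = E`, or `F = −E`, or `⟨F, E⟩ = 0`. -/
theorem bottleneck_orthogonality (r : ℕ) (hr : 0 < r) (n d : Fin r → ℕ)
    (hn : ∀ i, 0 < n i) (hd : ∀ i, 0 < d i)
    (ε : ℝ) (hε : ε = 1 ∨ ε = -1)
    (ℓ : (i : Fin r) → EuclideanSpace ℝ (Fin (n i + 1))) (hℓ : ∀ i, ‖ℓ i‖ = 1)
    (F : EuclideanSpace ℝ ((i : Fin r) → Exps (n i) (d i)))
    (hF : F = ε • Psi r n d ℓ)
    (horth : ∀ (i : Fin r) (k : Fin (n i)), ⟪F - Epoint r n d, bvec r n d hd i k⟫ = 0) :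
    F = Epoint r n d ∨ F = -Epoint r n d ∨ ⟪F, Epoint r n d⟫ = 0 := by
  classical
  have hE := Epoint_eq r n d
  by_cases hFE : ⟪F, Epoint r n d⟫ = 0
  · exact Or.inr (Or.inr hFE)
  have hεne : ε ≠ 0 := by rcases hε with rfl | rfl <;> norm_num
  have hεsq : ε * ε = 1 := by rcases hε with rfl | rfl <;> norm_num
  have hFapp : ∀ α, F α = ε * Psi r n d ℓ α := by
    intro α; rw [hF]; rfl
  have hinner : ⟪F, Epoint r n d⟫ = ε * ∏ i, (ℓ i 0) ^ (d i) := by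
    rw [hE, EuclideanSpace.inner_single_right]
    simp only [one_mul, RCLike.star_def, starRingEnd_apply, star_trivial]
    rw [hFapp]
    congr 1
    simp only [Psi, WithLp.ofLp_toLp]
    exact Finset.prod_congr rfl fun i _ => veronese_expPow (ℓ i)
  have hc : ∀ i, ℓ i 0 ≠ 0 := by
    intro i hzero
    apply hFE
    rw [hinner,
      Finset.prod_eq_zero (Finset.mem_univ i) (by rw [hzero]; exact zero_pow (hd i).ne'),
      mul_zero]
  have hsupp : ∀ i, ∀ m : Fin (n i + 1), m ≠ 0 → ℓ i m = 0 := by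
    intro i m hm
    obtain ⟨k, rfl⟩ := Fin.eq_succ_of_ne_zero hm
    have h1 := horth i k
    rw [bvec, EuclideanSpace.inner_single_right] at h1
    simp only [one_mul, RCLike.star_def, starRingEnd_apply, star_trivial] at h1
    set β := Function.update (fun j => expPow (n j) (d j)) i (expTang (n i) (d i) (hd i) k)
      with hβ
    have hEβ : Epoint r n d β = 0 := by
      rw [hE, EuclideanSpace.single_apply, if_neg]
      intro hcon
      have h2 := congrFun hcon i
      rw [hβ, Function.update_self] at h2
      exact expTang_ne_expPow (hd i) k h2
    have hFβ : F β = 0 := by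
      have : F β - Epoint r n d β = 0 := h1
      rw [hEβ, sub_zero] at this
      exact this
    rw [hFapp] at hFβ
    have hprod : ∏ j, veronese (n j) (d j) (ℓ j) (β j) = 0 := by
      rcases mul_eq_zero.mp hFβ with h | h
      · exact absurd h hεne
      · exact h
    rw [← Finset.mul_prod_erase _ _ (Finset.mem_univ i), hβ, Function.update_self,
      veronese_expTang (hd i) k] at hprod
    have hrest : ∏ j ∈ Finset.univ.erase i,
        veronese (n j) (d j) (ℓ j) (Function.update (fun j => expPow (n j) (d j)) i
          (expTang (n i) (d i) (hd i) k) j) ≠ 0 := by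
      apply Finset.prod_ne_zero_iff.mpr
      intro j hj
      rw [Function.update_of_ne (Finset.ne_of_mem_erase hj), veronese_expPow]
      exact pow_ne_zero _ (hc j)
    rcases mul_eq_zero.mp hprod with h | h
    · rcases mul_eq_zero.mp h with h' | h'
      · exact absurd h' (Real.sqrt_ne_zero'.mpr (by exact_mod_cast hd i))
      · rcases mul_eq_zero.mp h' with h'' | h''
        · exact absurd h'' (pow_ne_zero _ (hc i))
        · exact h''
    · exact absurd h hrest
  have hPsi := Psi_supported r n d ℓ hsupp
  have hFs : F = (ε * ∏ i, (ℓ i 0) ^ (d i)) • Epoint r n d := by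
    rw [hF, hPsi, hE, smul_smul]
  have hcc : ∀ i, ℓ i 0 * ℓ i 0 = 1 := by
    intro i
    have hsingle : ℓ i = EuclideanSpace.single 0 (ℓ i 0) := by
      ext m
      rw [EuclideanSpace.single_apply]
      rcases eq_or_ne m 0 with rfl | hm
      · simp
      · rw [if_neg hm, hsupp i m hm]
    have habs : |ℓ i 0| = 1 := by
      have := hℓ i
      rw [hsingle, EuclideanSpace.norm_single] at this
      simpa using this
    calc ℓ i 0 * ℓ i 0 = |ℓ i 0| * |ℓ i 0| := (abs_mul_abs_self _).symm
    _ = 1 := by rw [habs, mul_one]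
  have hs : (ε * ∏ i, (ℓ i 0) ^ (d i)) * (ε * ∏ i, (ℓ i 0) ^ (d i)) = 1 := by
    have : (∏ i, (ℓ i 0) ^ (d i)) * (∏ i, (ℓ i 0) ^ (d i)) = 1 := by
      rw [← Finset.prod_mul_distrib]
      apply Finset.prod_eq_one
      intro i _
      rw [← mul_pow, hcc i, one_pow]
    calc (ε * ∏ i, (ℓ i 0) ^ (d i)) * (ε * ∏ i, (ℓ i 0) ^ (d i))
        = (ε * ε) * ((∏ i, (ℓ i 0) ^ (d i)) * (∏ i, (ℓ i 0) ^ (d i))) := by ring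
    _ = 1 := by rw [hεsq, this, mul_one]
  rcases mul_self_eq_one_iff.mp hs with h1 | h1
  · left; rw [hFs, h1, one_smul]
  · right; left; rw [hFs, h1, neg_one_smul]
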